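/- For every integer k ≥ 1, the crosscap grid C_k (obtained from the (k,4k)-cylindrical grid by adding the edges {v^1_j v^1_{2k+j} | j ∈ [2k]}) contains the (2k × 2k)-grid as a spanning subgraph. -/

import Mathlib

open SimpleGraph

/-- `H` is a minor of `G`: there is a minor model of `H` in `G`, i.e. a family of pairwise
disjoint connected branch sets, one for each vertex of `H`, such that every edge of `H` is
realised by an edge of `G` between the corresponding branch sets. -/
def IsMinorOf {α β : Type*} (H : SimpleGraph α) (G : SimpleGraph β) : Prop :=
  ∃ X : α → Set β,
    (∀ u v : α, u ≠ v → Disjoint (X u) (X v)) ∧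
    (∀ v : α, (G.induce (X v)).Connected) ∧
    (∀ u v : α, H.Adj u v → ∃ a ∈ X u, ∃ b ∈ X v, G.Adj a b)

/-- The mixed surface grid of order `k` built from the `(k, 4*n*k)`-cylindrical grid
(where `n = h + c + 1`), with a handle added at every position in `Ih` and a crosscap added
at every position in `Ic`.  The vertex `v_j^i` (for `i ∈ [k]`, `j ∈ ℤ/(4nk)`) is encoded as
`(⟨i - 1⟩, j)`, so the top row `v^1` corresponds to first coordinate `0`. -/
def mixedGrid (k n : ℕ) (Ih Ic : Finset ℕ) :
    SimpleGraph (Fin k × ZMod (4 * n * k)) :=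
  SimpleGraph.fromRel (fun p q =>
    (p.1 = q.1 ∧ q.2 = p.2 + 1) ∨
    (p.2 = q.2 ∧ (q.1 : ℕ) = (p.1 : ℕ) + 1) ∨
    ((p.1 : ℕ) = 0 ∧ (q.1 : ℕ) = 0 ∧ ∃ i ∈ Ih, ∃ j ∈ Finset.Icc 1 k,
      ((p.2 = ((4 * k * (i - 1) + j : ℕ) : ZMod (4 * n * k)) ∧
        q.2 = ((4 * k * (i - 1) + 3 * k - j + 1 : ℕ) : ZMod (4 * n * k))) ∨
       (p.2 = ((4 * k * (i - 1) + k + j : ℕ) : ZMod (4 * n * k)) ∧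
        q.2 = ((4 * k * (i - 1) + 4 * k - j + 1 : ℕ) : ZMod (4 * n * k))))) ∨
    ((p.1 : ℕ) = 0 ∧ (q.1 : ℕ) = 0 ∧ ∃ i ∈ Ic, ∃ j ∈ Finset.Icc 1 (2 * k),
      p.2 = ((4 * k * (i - 1) + j : ℕ) : ZMod (4 * n * k)) ∧
      q.2 = ((4 * k * (i - 1) + 2 * k + j : ℕ) : ZMod (4 * n * k))))

/-- The Dyck grid `D_k^{(h,c)}`. -/
def dyckGrid (k h c : ℕ) : SimpleGraph (Fin k × ZMod (4 * (h + c + 1) * k)) :=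
  mixedGrid k (h + c + 1) (Finset.Icc 2 (h + 1)) (Finset.Icc (h + 2) (h + c + 1))

/-- The `(p × q)`-grid: vertex set `[p] × [q]`, with `(i,j)` adjacent to `(i,j+1)` and to
`(i+1,j)`. -/
def gridGraph (p q : ℕ) : SimpleGraph (Fin p × Fin q) :=
  SimpleGraph.fromRel (fun a b =>
    (a.1 = b.1 ∧ (b.2 : ℕ) = (a.2 : ℕ) + 1) ∨
    (a.2 = b.2 ∧ (b.1 : ℕ) = (a.1 : ℕ) + 1))

/-- The crosscap grid `C_k`: the `(k, 4k)`-cylindrical grid (the annulus grid `A_k`)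
together with the crosscap edges `v^1_j v^1_{2k+j}` for `j ∈ [2k]` (a crosscap at
position `1`). -/
def crosscapGrid (k : ℕ) : SimpleGraph (Fin k × ZMod (4 * 1 * k)) :=
  mixedGrid k 1 (∅ : Finset ℕ) ({1} : Finset ℕ)

/-- For every integer `k ≥ 1`, the crosscap grid `C_k` contains the
`(2k × 2k)`-grid as a spanning subgraph: there is a bijection from the vertices of the
`(2k × 2k)`-grid onto the vertices of `C_k` carrying edges to edges. -/
theorem crosscapGrid_contains_spanning_grid (k : ℕ) (hk : 1 ≤ k) :
    ∃ f : Fin (2 * k) × Fin (2 * k) → Fin k × ZMod (4 * 1 * k),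
      Function.Bijective f ∧
      ∀ u v, (gridGraph (2 * k) (2 * k)).Adj u v → (crosscapGrid k).Adj (f u) (f v) := by
  haveI : NeZero (4 * 1 * k) := ⟨by omega⟩
  set f : Fin (2 * k) × Fin (2 * k) → Fin k × ZMod (4 * 1 * k) := fun p =>
    (⟨if (p.1 : ℕ) < k then k - 1 - (p.1 : ℕ) else (p.1 : ℕ) - k, by
        have := p.1.isLt; split <;> omega⟩,
     ((if (p.1 : ℕ) < k then (p.2 : ℕ) + 1
       else if (p.2 : ℕ) + 1 = 2 * k then 0 else 2 * k + (p.2 : ℕ) + 1 : ℕ)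
        : ZMod (4 * 1 * k))) with hf
  have hlt : ∀ p : Fin (2 * k) × Fin (2 * k),
      (if (p.1 : ℕ) < k then (p.2 : ℕ) + 1
       else if (p.2 : ℕ) + 1 = 2 * k then 0 else 2 * k + (p.2 : ℕ) + 1) < 4 * 1 * k := by
    intro p
    have := p.2.isLt
    split
    · omega
    · split <;> omega
  have hinj : Function.Injective f := by
    rintro ⟨⟨r, hr⟩, ⟨c, hc⟩⟩ ⟨⟨r', hr'⟩, ⟨c', hc'⟩⟩ h
    rw [hf] at h
    simp only [Prod.mk.injEq, Fin.mk.injEq] at h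
    obtain ⟨h1, h2⟩ := h
    have h2' := congrArg ZMod.val h2
    rw [ZMod.val_cast_of_lt (hlt (⟨r, hr⟩, ⟨c, hc⟩)),
        ZMod.val_cast_of_lt (hlt (⟨r', hr'⟩, ⟨c', hc'⟩))] at h2'
    simp only [Prod.mk.injEq, Fin.mk.injEq]
    simp only [Fin.val_mk] at h1 h2'
    split_ifs at h1 h2' <;> omega
  have hb : Function.Bijective f := by
    rw [Fintype.bijective_iff_injective_and_card]
    refine ⟨hinj, ?_⟩
    simp only [Fintype.card_prod, Fintype.card_fin, ZMod.card]
    ring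
  have hNcast : ((4 * 1 * k : ℕ) : ZMod (4 * 1 * k)) = 0 := ZMod.natCast_self _
  have key : ∀ u v : Fin (2 * k) × Fin (2 * k),
      ((u.1 = v.1 ∧ (v.2 : ℕ) = (u.2 : ℕ) + 1) ∨ (u.2 = v.2 ∧ (v.1 : ℕ) = (u.1 : ℕ) + 1)) →
      u ≠ v → (crosscapGrid k).Adj (f u) (f v) := by
    rintro ⟨⟨r, hr⟩, ⟨c, hc⟩⟩ ⟨⟨r', hr'⟩, ⟨c', hc'⟩⟩ hcase hne
    simp only [crosscapGrid, mixedGrid, fromRel_adj, Finset.notMem_empty, false_and,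
      exists_false, Finset.mem_singleton, and_false, false_or]
    refine ⟨fun h => hne (hinj h), ?_⟩
    simp only [Fin.val_mk] at hcase ⊢
    rcases hcase with ⟨hrr, hcc⟩ | ⟨hcc, hrr⟩
    · -- horizontal edge: r = r', c' = c + 1
      obtain rfl : r = r' := by simpa [Fin.mk.injEq] using hrr
      obtain rfl : c' = c + 1 := hcc
      left; left
      refine ⟨rfl, ?_⟩
      by_cases hrk : r < k
      · simp only [hf, if_pos hrk]
        push_cast
        ring
      · simp only [hf, if_neg hrk]
        have hc1 : ¬ (c + 1 = 2 * k) := by omega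
        rw [if_neg hc1]
        by_cases hc2 : c + 1 + 1 = 2 * k
        · rw [if_pos hc2]
          have : ((2 * k + c + 1 + 1 : ℕ) : ZMod (4 * 1 * k)) = 0 := by
            rw [show 2 * k + c + 1 + 1 = 4 * 1 * k by omega]; exact hNcast
          push_cast at this ⊢
          linear_combination -this
        · rw [if_neg hc2]
          push_cast
          ring
    · -- vertical edge: c = c', r' = r + 1
      obtain rfl : c = c' := by simpa [Fin.mk.injEq] using hcc
      obtain rfl : r' = r + 1 := hrr
      by_cases h1 : r + 1 < k
      · -- both in the top half; edge goes upward in the cylinder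
        right; right; left
        have h0 : r < k := by omega
        simp only [hf, if_pos h0, if_pos h1, Fin.val_mk]
        exact ⟨trivial, by omega⟩
      · by_cases h2 : r + 1 = k
        · -- crosscap edge
          left; right; right
          have h0 : r < k := by omega
          have h1' : ¬ (r + 1 < k) := h1
          simp only [hf, if_pos h0, if_neg h1', Fin.val_mk]
          refine ⟨by omega, by omega, 1, rfl, c + 1, Finset.mem_Icc.mpr ⟨by omega, by omega⟩,
            ?_, ?_⟩
          · exact congrArg Nat.cast (by omega)
          · by_cases hc1 : c + 1 = 2 * k
            · rw [if_pos hc1]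
              rw [show 4 * k * (1 - 1) + 2 * k + (c + 1) = 4 * 1 * k by omega, hNcast]
              norm_num
            · rw [if_neg hc1]
              exact congrArg Nat.cast (by omega)
        · -- both in the bottom half; edge goes downward in the cylinder
          left; right; left
          have h0 : ¬ (r < k) := by omega
          have h1' : ¬ (r + 1 < k) := h1
          simp only [hf, if_neg h0, if_neg h1', Fin.val_mk]
          exact ⟨trivial, by omega⟩
  refine ⟨f, hb, ?_⟩
  intro u v huv
  rw [gridGraph, fromRel_adj] at huv
  obtain ⟨hne, hbase | hbase⟩ := huv
  · exact key u v hbase hne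
  · exact (key v u hbase hne.symm).symm
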